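/- Let μ : F^× → ℂ^× be an unramified character (trivial on O_F^×), let χ(a b; 0 d) = μ(a/d) on the Borel B, let a = μ(ϖ)/√q where q is the residue cardinality, and let f : GL₂(F) → ℂ be the function satisfying f(bk) = χ(b)|a_b/d_b|^{1/2} for b ∈ B, k ∈ GL₂(O_F) (the spherical vector of Ind_B^G χ). Then for k = (x y; z t) ∈ GL₂(O_F) and i ∈ ℕ: f(kγ⁻ⁱ) = aⁱ if val(z/t) ≤ 0 (including t = 0), f(kγ⁻ⁱ) = a^{i−2·val(z/t)} if 1 ≤ val(z/t) ≤ i−1, and f(kγ⁻ⁱ) = a^{−i} if val(z/t) ≥ i. -/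

import Mathlib

open Matrix

noncomputable section

/-- `x ∈ F` is a unit of the ring of integers `O`. -/
def UnitO {F : Type*} [Field F] (O : ValuationSubring F) (x : F) : Prop :=
  x ∈ O ∧ ∃ u ∈ O, x * u = 1

/-- `GL₂(O_F)` viewed as a set of matrices over `F`. -/
def Kset {F : Type*} [Field F] (O : ValuationSubring F) : Set (Matrix (Fin 2) (Fin 2) F) :=
  {g | (∀ i j, g i j ∈ O) ∧ ∃ u ∈ O, g.det * u = 1}

/-- The upper triangular Borel subgroup `B ⊂ GL₂(F)`, as a set of matrices. -/
def Bset (F : Type*) [Field F] : Set (Matrix (Fin 2) (Fin 2) F) :=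
  {g | g 1 0 = 0 ∧ g.det ≠ 0}

namespace St8Aux

variable {F : Type*} [Field F] (O : ValuationSubring F)

lemma unitO_ne_zero {x : F} (h : UnitO O x) : x ≠ 0 := by
  rintro rfl
  obtain ⟨-, u, -, hu⟩ := h
  simp at hu

lemma unitO_mul {x y : F} (hx : UnitO O x) (hy : UnitO O y) : UnitO O (x * y) := by
  obtain ⟨hx1, u, hu, hxu⟩ := hx
  obtain ⟨hy1, w, hw, hyw⟩ := hy
  exact ⟨mul_mem hx1 hy1, u * w, mul_mem hu hw, by
    calc x * y * (u * w) = (x * u) * (y * w) := by ring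
    _ = 1 := by rw [hxu, hyw, mul_one]⟩

lemma unitO_inv {x : F} (hx : UnitO O x) : UnitO O x⁻¹ := by
  obtain ⟨hx1, u, hu, hxu⟩ := hx
  have hx0 : x ≠ 0 := by rintro rfl; simp at hxu
  have hux : u = x⁻¹ := by field_simp; linear_combination hxu
  exact ⟨hux ▸ hu, x, hx1, by field_simp⟩

lemma unitO_neg {x : F} (hx : UnitO O x) : UnitO O (-x) := by
  obtain ⟨hx1, u, hu, hxu⟩ := hx
  exact ⟨neg_mem hx1, -u, neg_mem hu, by rw [neg_mul_neg, hxu]⟩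

lemma unitO_one : UnitO O (1 : F) := ⟨one_mem O, 1, one_mem O, mul_one 1⟩

lemma sqrt_zpow {x : ℝ} (hx : 0 < x) (n : ℤ) : Real.sqrt (x ^ n) = Real.sqrt x ^ n := by
  rw [← Real.rpow_intCast x n, Real.sqrt_eq_rpow, Real.sqrt_eq_rpow,
    ← Real.rpow_intCast (x ^ ((1:ℝ)/2)) n,
    ← Real.rpow_mul hx.le, ← Real.rpow_mul hx.le, mul_comm]

variable {O} {ϖ : F} {q : ℕ} {v : AbsoluteValue F ℝ} {μ : F → ℂ}

/-- Key computation: value of `μ(w ϖ^n) √(v(w ϖ^n))` for `w` a unit. -/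
lemma key_calc (hϖ0 : ϖ ≠ 0) (hq : 1 < q)
    (hvϖ : v ϖ = 1 / q) (hvu : ∀ x : F, UnitO O x → v x = 1)
    (hμ1 : μ 1 = 1)
    (hμ : ∀ x y : F, x ≠ 0 → y ≠ 0 → μ (x * y) = μ x * μ y)
    (hμu : ∀ x : F, UnitO O x → μ x = 1)
    {w : F} (hw : UnitO O w) (n : ℤ) :
    μ (w * ϖ ^ n) * (Real.sqrt (v (w * ϖ ^ n)) : ℂ)
      = (μ ϖ / (Real.sqrt q : ℂ)) ^ n := by
  have hq0 : (0:ℝ) < q := by positivity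
  have hμinv : ∀ x : F, x ≠ 0 → μ x⁻¹ = (μ x)⁻¹ := by
    intro x hx
    have h := hμ x x⁻¹ hx (inv_ne_zero hx)
    rw [mul_inv_cancel₀ hx, hμ1] at h
    exact (inv_eq_of_mul_eq_one_right h.symm).symm
  have hμpow : ∀ k : ℕ, μ (ϖ ^ k) = μ ϖ ^ k := by
    intro k
    induction k with
    | zero => simpa using hμ1
    | succ k ih =>
      rw [pow_succ, hμ (ϖ ^ k) ϖ (pow_ne_zero _ hϖ0) hϖ0, ih, pow_succ]
  have hμzpow : μ (ϖ ^ n) = μ ϖ ^ n := by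
    rcases n with k | k
    · simpa using hμpow k
    · rw [Int.negSucc_eq, _root_.zpow_neg, _root_.zpow_neg,
        show ((k:ℤ) + 1) = ((k + 1 : ℕ) : ℤ) by push_cast; ring,
        zpow_natCast, zpow_natCast, hμinv _ (pow_ne_zero _ hϖ0), hμpow]
  have hμw : μ (w * ϖ ^ n) = μ ϖ ^ n := by
    rw [hμ w (ϖ ^ n) (unitO_ne_zero O hw) (zpow_ne_zero n hϖ0), hμu w hw, hμzpow, one_mul]
  have hvw : v (w * ϖ ^ n) = (q : ℝ) ^ (-n) := by
    rw [_root_.map_mul, hvu w hw, one_mul, map_zpow₀, hvϖ, one_div, _root_.inv_zpow, ← _root_.zpow_neg]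
  rw [hμw, hvw, sqrt_zpow hq0, Complex.ofReal_zpow, div_zpow, _root_.zpow_neg, div_eq_mul_inv]

/-- Iwasawa decomposition computation when the lower-left entry is nonzero. -/
lemma decomp {f : Matrix (Fin 2) (Fin 2) F → ℂ}
    (hf : ∀ b ∈ Bset F, ∀ k ∈ Kset O,
      f (b * k) = μ (b 0 0 / b 1 1) * (Real.sqrt (v (b 0 0 / b 1 1)) : ℂ))
    {g : Matrix (Fin 2) (Fin 2) F} (hC : g 1 0 ≠ 0) (hdet : g.det ≠ 0)
    (hD : g 1 1 / g 1 0 ∈ O) :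
    f g = μ (-g.det / (g 1 0) ^ 2) * (Real.sqrt (v (-g.det / (g 1 0) ^ 2)) : ℂ) := by
  have hdet2 : g.det = g 0 0 * g 1 1 - g 0 1 * g 1 0 := Matrix.det_fin_two g
  have hb : !![-g.det / g 1 0, g 0 0; 0, g 1 0] ∈ Bset F := by
    refine ⟨by simp, ?_⟩
    rw [det_fin_two_of]
    field_simp
    simpa using hdet
  have hk' : !![0, 1; 1, g 1 1 / g 1 0] ∈ Kset O := by
    constructor
    · intro i j
      fin_cases i <;> fin_cases j <;>
        simp only [Matrix.cons_val', Matrix.cons_val_zero, Matrix.cons_val_one,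
          Matrix.head_cons, Matrix.empty_val', Matrix.cons_val_fin_one, Matrix.head_fin_const]
      · exact zero_mem O
      · exact one_mem O
      · exact one_mem O
      · exact hD
    · refine ⟨-1, neg_mem (one_mem O), ?_⟩
      rw [det_fin_two_of]
      ring
  have hbk : !![-g.det / g 1 0, g 0 0; 0, g 1 0] * !![0, 1; 1, g 1 1 / g 1 0] = g := by
    conv_rhs => rw [Matrix.eta_fin_two g]
    rw [Matrix.mul_fin_two]
    have h1 : -g.det / g 1 0 * 0 + g 0 0 * 1 = g 0 0 := by ring
    have h2 : -g.det / g 1 0 * 1 + g 0 0 * (g 1 1 / g 1 0) = g 0 1 := by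
      rw [hdet2]
      field_simp
      ring
    have h3 : (0:F) * 0 + g 1 0 * 1 = g 1 0 := by ring
    have h4 : (0:F) * 1 + g 1 0 * (g 1 1 / g 1 0) = g 1 1 := by field_simp; ring
    rw [h1, h2, h3, h4]
  have := hf _ hb _ hk'
  rw [hbk] at this
  rw [this]
  have he : (!![-g.det / g 1 0, g 0 0; 0, g 1 0] : Matrix (Fin 2) (Fin 2) F) 0 0
      / !![-g.det / g 1 0, g 0 0; 0, g 1 0] 1 1 = -g.det / g 1 0 ^ 2 := by
    show (-g.det / g 1 0) / g 1 0 = _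
    rw [div_div, ← sq]
  rw [he]

end St8Aux

open St8Aux

/-- values of the translated spherical vector `f(kγ⁻ⁱ)` for
`k = (x y; z t) ∈ GL₂(O_F)`:
`aⁱ` if `val(z/t) ≤ 0` (i.e. `z` is a unit); `a^(i−2m)` if `val(z/t) = m` with
`1 ≤ m ≤ i−1` (i.e. `z = ϖᵐ·unit` and `t` a unit); `a^(−i)` if `val(z/t) ≥ i`
(i.e. `ϖⁱ ∣ z` and `t` a unit). Here `a = μ(ϖ)/√q`. -/
theorem statement8 {F : Type*} [Field F] (O : ValuationSubring F) (ϖ : F) (hϖ : ϖ ∈ O)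
    (hirr : Irreducible (⟨ϖ, hϖ⟩ : O)) (q : ℕ) (hq : 1 < q)
    (v : AbsoluteValue F ℝ) (hvϖ : v ϖ = 1 / q) (hvu : ∀ x : F, UnitO O x → v x = 1)
    (μ : F → ℂ) (hμ1 : μ 1 = 1)
    (hμ : ∀ x y : F, x ≠ 0 → y ≠ 0 → μ (x * y) = μ x * μ y)
    (hμu : ∀ x : F, UnitO O x → μ x = 1)
    (f : Matrix (Fin 2) (Fin 2) F → ℂ)
    (hf : ∀ b ∈ Bset F, ∀ k ∈ Kset O,
      f (b * k) = μ (b 0 0 / b 1 1) * (Real.sqrt (v (b 0 0 / b 1 1)) : ℂ))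
    (a : ℂ) (ha : a = μ ϖ / (Real.sqrt q : ℂ))
    (x y z t : F) (hk : !![x, y; z, t] ∈ Kset O) (i : ℕ) :
    (UnitO O z → f (!![x, y; z, t] * !![(ϖ ^ i)⁻¹, 0; 0, 1]) = a ^ i) ∧
    (∀ m : ℕ, 1 ≤ m → m ≤ i - 1 → (∃ u : F, UnitO O u ∧ z = ϖ ^ m * u) → UnitO O t →
      f (!![x, y; z, t] * !![(ϖ ^ i)⁻¹, 0; 0, 1]) = a ^ ((i : ℤ) - 2 * m)) ∧
    ((∃ r ∈ O, z = ϖ ^ i * r) → UnitO O t →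
      f (!![x, y; z, t] * !![(ϖ ^ i)⁻¹, 0; 0, 1]) = a ^ (-(i : ℤ))) := by
  have hϖ0 : ϖ ≠ 0 := by
    intro h
    exact hirr.ne_zero (Subtype.ext (by simpa using h))
  have hpow0 : ∀ j : ℕ, ϖ ^ j ≠ 0 := fun j => pow_ne_zero j hϖ0
  have hxO : x ∈ O := by simpa using hk.1 0 0
  have hyO : y ∈ O := by simpa using hk.1 0 1
  have hzO : z ∈ O := by simpa using hk.1 1 0
  have htO : t ∈ O := by simpa using hk.1 1 1
  obtain ⟨d, hdO, hdd⟩ := hk.2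
  rw [det_fin_two_of] at hdd
  have hdetU : UnitO O (x * t - y * z) :=
    ⟨sub_mem (mul_mem hxO htO) (mul_mem hyO hzO), d, hdO, hdd⟩
  have hdet0 : x * t - y * z ≠ 0 := unitO_ne_zero O hdetU
  have hg : !![x, y; z, t] * !![(ϖ ^ i)⁻¹, 0; 0, 1]
      = !![x * (ϖ ^ i)⁻¹, y; z * (ϖ ^ i)⁻¹, t] := by
    rw [Matrix.mul_fin_two]
    congr 1 <;> ring_nf
  refine ⟨?_, ?_, ?_⟩
  · -- Case 1 : z is a unit
    intro hz
    have hz0 : z ≠ 0 := unitO_ne_zero O hz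
    have hC : (!![x * (ϖ ^ i)⁻¹, y; z * (ϖ ^ i)⁻¹, t] : Matrix (Fin 2) (Fin 2) F) 1 0 ≠ 0 := by
      show z * (ϖ ^ i)⁻¹ ≠ 0
      exact mul_ne_zero hz0 (inv_ne_zero (hpow0 i))
    have hdetg : (!![x * (ϖ ^ i)⁻¹, y; z * (ϖ ^ i)⁻¹, t] : Matrix (Fin 2) (Fin 2) F).det
        = (x * t - y * z) * (ϖ ^ i)⁻¹ := by
      rw [det_fin_two_of]; ring
    have hdetg0 : (!![x * (ϖ ^ i)⁻¹, y; z * (ϖ ^ i)⁻¹, t] : Matrix (Fin 2) (Fin 2) F).det ≠ 0 := by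
      rw [hdetg]
      exact mul_ne_zero hdet0 (inv_ne_zero (hpow0 i))
    have hD : (!![x * (ϖ ^ i)⁻¹, y; z * (ϖ ^ i)⁻¹, t] : Matrix (Fin 2) (Fin 2) F) 1 1
        / !![x * (ϖ ^ i)⁻¹, y; z * (ϖ ^ i)⁻¹, t] 1 0 ∈ O := by
      show t / (z * (ϖ ^ i)⁻¹) ∈ O
      have : t / (z * (ϖ ^ i)⁻¹) = t * z⁻¹ * ϖ ^ i := by field_simp
      rw [this]
      exact mul_mem (mul_mem htO (unitO_inv O hz).1) (pow_mem hϖ i)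
    rw [hg, decomp hf hC hdetg0 hD]
    have hw : UnitO O (-(x * t - y * z) * (z⁻¹ * z⁻¹)) :=
      unitO_mul O (unitO_neg O hdetU) (unitO_mul O (unitO_inv O hz) (unitO_inv O hz))
    have harg : -(!![x * (ϖ ^ i)⁻¹, y; z * (ϖ ^ i)⁻¹, t] : Matrix (Fin 2) (Fin 2) F).det
        / (!![x * (ϖ ^ i)⁻¹, y; z * (ϖ ^ i)⁻¹, t] 1 0) ^ 2
        = (-(x * t - y * z) * (z⁻¹ * z⁻¹)) * ϖ ^ (i : ℤ) := by
      rw [hdetg, zpow_natCast]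
      show -((x * t - y * z) * (ϖ ^ i)⁻¹) / (z * (ϖ ^ i)⁻¹) ^ 2 = _
      field_simp
    rw [harg, key_calc hϖ0 hq hvϖ hvu hμ1 hμ hμu hw (i : ℤ), ha, zpow_natCast]
  · -- Case 2 : z = ϖ^m u with 1 ≤ m ≤ i-1, t a unit
    intro m hm1 hm2 ⟨u, hu, hzu⟩ ht
    have him : m < i := by omega
    have hu0 : u ≠ 0 := unitO_ne_zero O hu
    have hz0 : z ≠ 0 := by rw [hzu]; exact mul_ne_zero (hpow0 m) hu0
    have hsub : ϖ ^ (i - m) * ϖ ^ m = ϖ ^ i := by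
      rw [← pow_add, Nat.sub_add_cancel him.le]
    have hC : (!![x * (ϖ ^ i)⁻¹, y; z * (ϖ ^ i)⁻¹, t] : Matrix (Fin 2) (Fin 2) F) 1 0 ≠ 0 := by
      show z * (ϖ ^ i)⁻¹ ≠ 0
      exact mul_ne_zero hz0 (inv_ne_zero (hpow0 i))
    have hdetg : (!![x * (ϖ ^ i)⁻¹, y; z * (ϖ ^ i)⁻¹, t] : Matrix (Fin 2) (Fin 2) F).det
        = (x * t - y * z) * (ϖ ^ i)⁻¹ := by
      rw [det_fin_two_of]; ring
    have hdetg0 : (!![x * (ϖ ^ i)⁻¹, y; z * (ϖ ^ i)⁻¹, t] : Matrix (Fin 2) (Fin 2) F).det ≠ 0 := by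
      rw [hdetg]
      exact mul_ne_zero hdet0 (inv_ne_zero (hpow0 i))
    have hD : (!![x * (ϖ ^ i)⁻¹, y; z * (ϖ ^ i)⁻¹, t] : Matrix (Fin 2) (Fin 2) F) 1 1
        / !![x * (ϖ ^ i)⁻¹, y; z * (ϖ ^ i)⁻¹, t] 1 0 ∈ O := by
      show t / (z * (ϖ ^ i)⁻¹) ∈ O
      have he : t / (z * (ϖ ^ i)⁻¹) = t * u⁻¹ * ϖ ^ (i - m) := by
        rw [hzu]
        field_simp
        linear_combination (-t) * hsub
      rw [he]
      exact mul_mem (mul_mem htO (unitO_inv O hu).1) (pow_mem hϖ _)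
    rw [hg, decomp hf hC hdetg0 hD]
    have hw : UnitO O (-(x * t - y * z) * (u⁻¹ * u⁻¹)) :=
      unitO_mul O (unitO_neg O hdetU) (unitO_mul O (unitO_inv O hu) (unitO_inv O hu))
    have harg : -(!![x * (ϖ ^ i)⁻¹, y; z * (ϖ ^ i)⁻¹, t] : Matrix (Fin 2) (Fin 2) F).det
        / (!![x * (ϖ ^ i)⁻¹, y; z * (ϖ ^ i)⁻¹, t] 1 0) ^ 2
        = (-(x * t - y * z) * (u⁻¹ * u⁻¹)) * ϖ ^ ((i : ℤ) - 2 * m) := by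
      rw [hdetg, zpow_sub₀ hϖ0, zpow_natCast,
        show (2 * (m : ℤ)) = ((2 * m : ℕ) : ℤ) by push_cast; ring, zpow_natCast]
      show -((x * t - y * z) * (ϖ ^ i)⁻¹) / (z * (ϖ ^ i)⁻¹) ^ 2 = _
      rw [hzu]
      field_simp
      ring
    rw [harg, key_calc hϖ0 hq hvϖ hvu hμ1 hμ hμu hw ((i : ℤ) - 2 * m), ha]
  · -- Case 3 : ϖ^i ∣ z, t a unit
    intro ⟨r, hrO, hzr⟩ ht
    have hb : !![(ϖ ^ i)⁻¹, 0; 0, 1] ∈ Bset F := by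
      refine ⟨by simp, ?_⟩
      rw [det_fin_two_of]
      simpa using inv_ne_zero (hpow0 i)
    have hk' : !![x, ϖ ^ i * y; r, t] ∈ Kset O := by
      constructor
      · intro i' j'
        fin_cases i' <;> fin_cases j' <;> simp [hxO, hyO, hrO, htO, mul_mem (pow_mem hϖ i) hyO]
      · refine ⟨d, hdO, ?_⟩
        rw [det_fin_two_of]
        rw [hzr] at hdd
        linear_combination hdd
    have hbk : !![(ϖ ^ i)⁻¹, 0; 0, 1] * !![x, ϖ ^ i * y; r, t]
        = !![x, y; z, t] * !![(ϖ ^ i)⁻¹, 0; 0, 1] := by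
      rw [hg, Matrix.mul_fin_two]
      have h1 : (ϖ ^ i)⁻¹ * x + 0 * r = x * (ϖ ^ i)⁻¹ := by ring
      have h2 : (ϖ ^ i)⁻¹ * (ϖ ^ i * y) + 0 * t = y := by field_simp; ring
      have h3 : (0 : F) * x + 1 * r = z * (ϖ ^ i)⁻¹ := by
        rw [hzr]; field_simp; ring
      have h4 : (0 : F) * (ϖ ^ i * y) + 1 * t = t := by ring
      rw [h1, h2, h3, h4]
    rw [← hbk, hf _ hb _ hk']
    have he : (!![(ϖ ^ i)⁻¹, 0; 0, 1] : Matrix (Fin 2) (Fin 2) F) 0 0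
        / !![(ϖ ^ i)⁻¹, 0; 0, 1] 1 1 = (1 : F) * ϖ ^ (-(i : ℤ)) := by
      show (ϖ ^ i)⁻¹ / 1 = _
      rw [_root_.zpow_neg, zpow_natCast, div_one, one_mul]
    rw [he, key_calc hϖ0 hq hvϖ hvu hμ1 hμ hμu (unitO_one O) (-(i : ℤ)), ha]
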